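/- Suppose for all t and u that P(T_P > t, T_R > u) ≥ P(T_P > t)·P(T_R > u), where T_P, T_R are random variables and C_P is a censoring variable independent of (T_P, T_R). Then P(T_R > u | T_P ≤ C_P) ≤ P(T_R > u) ≤ P(T_R > u | T_P > C_P), provided 0 < P(T_P ≤ C_P) < 1. -/

import Mathlib

open MeasureTheory ProbabilityTheory

/-- Under positive quadrant dependence of `(T_P, T_R)` and censoring `C_P` independent of
the pair, `P(T_R > u | T_P ≤ C_P) ≤ P(T_R > u) ≤ P(T_R > u | T_P > C_P)`. -/
theorem pqd_conditional_survival_bounds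
    {Ω : Type*} [MeasurableSpace Ω] (P : Measure Ω) [IsProbabilityMeasure P]
    (TP TR CP : Ω → ℝ) (hTP : Measurable TP) (hTR : Measurable TR) (hCP : Measurable CP)
    (hindep : IndepFun (fun ω => (TP ω, TR ω)) CP P)
    (hPQD : ∀ t u : ℝ, P {ω | t < TP ω} * P {ω | u < TR ω} ≤ P {ω | t < TP ω ∧ u < TR ω})
    (h0 : 0 < P {ω | TP ω ≤ CP ω}) (h1 : P {ω | TP ω ≤ CP ω} < 1) (u : ℝ) :
    ProbabilityTheory.cond P {ω | TP ω ≤ CP ω} {ω | u < TR ω} ≤ P {ω | u < TR ω} ∧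
    P {ω | u < TR ω} ≤ ProbabilityTheory.cond P {ω | CP ω < TP ω} {ω | u < TR ω} := by
  have hmTPR : Measurable (fun ω => (TP ω, TR ω)) := hTP.prodMk hTR
  have hφ : Measurable (fun ω => ((TP ω, TR ω), CP ω)) := hmTPR.prodMk hCP
  set μ := P.map (fun ω => (TP ω, TR ω)) with hμ
  set ν := P.map CP with hν
  have hmap : P.map (fun ω => ((TP ω, TR ω), CP ω)) = μ.prod ν :=
    (indepFun_iff_map_prod_eq_prod_map_map hmTPR.aemeasurable hCP.aemeasurable).mp hindep
  have hS : MeasurableSet {p : (ℝ × ℝ) × ℝ | p.2 < p.1.1 ∧ u < p.1.2} :=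
    (measurableSet_lt measurable_snd (measurable_fst.fst)).inter
      (measurableSet_lt measurable_const (measurable_fst.snd))
  have hS' : MeasurableSet {p : (ℝ × ℝ) × ℝ | p.2 < p.1.1} :=
    measurableSet_lt measurable_snd (measurable_fst.fst)
  set c := P {ω | u < TR ω} with hc
  have hP1 : P {ω | CP ω < TP ω ∧ u < TR ω}
      = (μ.prod ν) {p : (ℝ × ℝ) × ℝ | p.2 < p.1.1 ∧ u < p.1.2} := by
    rw [← hmap, Measure.map_apply hφ hS]; rfl
  have hP2 : P {ω | CP ω < TP ω} = (μ.prod ν) {p : (ℝ × ℝ) × ℝ | p.2 < p.1.1} := by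
    rw [← hmap, Measure.map_apply hφ hS']; rfl
  have key : P {ω | CP ω < TP ω} * c ≤ P {ω | CP ω < TP ω ∧ u < TR ω} := by
    rw [hP1, hP2, Measure.prod_apply_symm hS, Measure.prod_apply_symm hS']
    rw [← MeasureTheory.lintegral_mul_const c (measurable_measure_prodMk_right hS')]
    refine lintegral_mono fun y => ?_
    have e1 : μ ((fun x => (x, y)) ⁻¹' {p : (ℝ × ℝ) × ℝ | p.2 < p.1.1}) = P {ω | y < TP ω} := by
      have hpre : ((fun x : ℝ × ℝ => (x, y)) ⁻¹' {p : (ℝ × ℝ) × ℝ | p.2 < p.1.1})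
          = {x : ℝ × ℝ | y < x.1} := rfl
      rw [hpre, hμ, Measure.map_apply hmTPR (measurableSet_lt measurable_const measurable_fst)]
      rfl
    have e2 : μ ((fun x => (x, y)) ⁻¹' {p : (ℝ × ℝ) × ℝ | p.2 < p.1.1 ∧ u < p.1.2}) =
        P {ω | y < TP ω ∧ u < TR ω} := by
      have hpre : ((fun x : ℝ × ℝ => (x, y)) ⁻¹' {p : (ℝ × ℝ) × ℝ | p.2 < p.1.1 ∧ u < p.1.2})
          = {x : ℝ × ℝ | y < x.1} ∩ {x : ℝ × ℝ | u < x.2} := rfl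
      rw [hpre, hμ, Measure.map_apply hmTPR ((measurableSet_lt measurable_const measurable_fst).inter
        (measurableSet_lt measurable_const measurable_snd))]
      rfl
    rw [e1, e2]
    exact hPQD y u
  set B := {ω | u < TR ω} with hBdef
  set A := {ω | TP ω ≤ CP ω} with hAdef
  have hAmeas : MeasurableSet A := measurableSet_le hTP hCP
  have hBmeas : MeasurableSet B := measurableSet_lt measurable_const hTR
  have hcompl : {ω | CP ω < TP ω} = Aᶜ := by
    ext ω; simp [hAdef, not_le]
  have hinter : {ω | CP ω < TP ω ∧ u < TR ω} = Aᶜ ∩ B := by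
    ext ω; simp [hAdef, hBdef, not_le, Set.mem_inter_iff, and_comm]
  rw [hcompl, hinter] at key
  have ha_ne_top : P A ≠ ⊤ := measure_ne_top _ _
  have hc_ne_top : c ≠ ⊤ := measure_ne_top _ _
  have hAc_pos : 0 < P Aᶜ := by
    rw [prob_compl_eq_one_sub hAmeas]
    exact tsub_pos_of_lt h1
  have hsplit : P (A ∩ B) + P (Aᶜ ∩ B) = c := by
    have h := measure_inter_add_diff (μ := P) B hAmeas
    rw [Set.inter_comm, Set.diff_eq, Set.inter_comm B Aᶜ] at h
    exact h
  have hsum : P A * c + P Aᶜ * c = c := by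
    rw [← add_mul, measure_add_measure_compl hAmeas, measure_univ, one_mul]
  have hfirst : P (A ∩ B) ≤ P A * c := by
    have h2 : P (A ∩ B) + P (Aᶜ ∩ B) ≤ P A * c + P (Aᶜ ∩ B) := by
      calc P (A ∩ B) + P (Aᶜ ∩ B) = c := hsplit
        _ = P A * c + P Aᶜ * c := hsum.symm
        _ ≤ P A * c + P (Aᶜ ∩ B) := add_le_add_right key _
    exact (ENNReal.add_le_add_iff_right (measure_ne_top _ _)).mp h2
  constructor
  · rw [cond_apply hAmeas]
    calc (P A)⁻¹ * P (A ∩ B) ≤ (P A)⁻¹ * (P A * c) := by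
          exact mul_le_mul_right hfirst _
      _ = c := by
          rw [← mul_assoc, ENNReal.inv_mul_cancel h0.ne' ha_ne_top, one_mul]
  · rw [hcompl, cond_apply hAmeas.compl]
    calc c = (P Aᶜ)⁻¹ * (P Aᶜ * c) := by
          rw [← mul_assoc, ENNReal.inv_mul_cancel hAc_pos.ne' (measure_ne_top _ _), one_mul]
      _ ≤ (P Aᶜ)⁻¹ * P (Aᶜ ∩ B) := mul_le_mul_right key _
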